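/- arXiv:1003.4398 — 2 statements merged into one kernel-verified Lean document; each statement's English description precedes it below -/
import Mathlib

section
/- The set 𝒯_{𝔥,k} of trees of minimal order with height exactly k satisfies the recursion 𝒯_{𝔥,k} = {[τ]_l : τ ∈ 𝒯_{𝔥,k−1}, l ≥ 1} for k ≥ 2, and the minimal order of a tree with height k equals k/2. -/
inductive CTree (m : ℕ) : Type
  | node : Fin (m + 1) → List (CTree m) → CTree m

namespace CTree

variable {m : ℕ}

def rho : CTree m → ℚ
  | .node l ts => (if (l : ℕ) = 0 then 1 else 1/2) + (ts.attach.map (fun t => rho t.1)).sum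
decreasing_by
  all_goals try simp only [CTree.node.sizeOf_spec, List.cons.sizeOf_spec, List.nil.sizeOf_spec]
  all_goals try have := List.sizeOf_lt_of_mem t.2
  all_goals omega

def height : CTree m → ℕ
  | .node _ ts => 1 + (ts.attach.map (fun t => height t.1)).foldr max 0
decreasing_by
  all_goals try simp only [CTree.node.sizeOf_spec, List.cons.sizeOf_spec, List.nil.sizeOf_spec]
  all_goals try have := List.sizeOf_lt_of_mem t.2
  all_goals omega

def ram : CTree m → ℕ
  | .node _ [] => 1
  | .node _ [t] => ram t
  | .node _ ts => 1 + (ts.attach.map (fun t => ram t.1)).foldr max 0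
decreasing_by
  all_goals try simp only [CTree.node.sizeOf_spec, List.cons.sizeOf_spec, List.nil.sizeOf_spec]
  all_goals try have := List.sizeOf_lt_of_mem t.2
  all_goals omega

def dbl : CTree m → ℕ
  | .node _ [] => 1
  | .node _ ts =>
      let ds := ts.attach.map (fun t => dbl t.1)
      let M := ds.foldr max 0
      if 2 ≤ ds.count M then M + 1 else M
decreasing_by
  all_goals try simp only [CTree.node.sizeOf_spec, List.cons.sizeOf_spec, List.nil.sizeOf_spec]
  all_goals try have := List.sizeOf_lt_of_mem t.2
  all_goals omega


end CTree
namespace CTree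
variable {m : ℕ}

noncomputable local instance : DecidableEq (CTree m) := Classical.decEq _

lemma rho_node (l : Fin (m+1)) (ts : List (CTree m)) :
    rho (node l ts) = (if (l : ℕ) = 0 then 1 else 1/2) + (ts.map rho).sum := by
  rw [rho]; congr 1; rw [List.attach_map_val]

lemma height_node (l : Fin (m+1)) (ts : List (CTree m)) :
    height (node l ts) = 1 + (ts.map height).foldr max 0 := by
  rw [height]; congr 1; rw [List.attach_map_val]

lemma one_le_height (τ : CTree m) : 1 ≤ height τ := by
  cases τ with
  | node l ts => rw [height_node]; omega

lemma le_foldr_max {ns : List ℕ} {x : ℕ} (h : x ∈ ns) : x ≤ ns.foldr max 0 := by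
  induction ns with
  | nil => simp at h
  | cons a as ih =>
    rcases List.mem_cons.mp h with rfl | h
    · exact Nat.le_max_left _ _
    · exact le_trans (ih h) (Nat.le_max_right _ _)

lemma foldr_max_mem {ns : List ℕ} (h : ns.foldr max 0 ≠ 0) : ns.foldr max 0 ∈ ns := by
  induction ns with
  | nil => simp at h
  | cons a as ih =>
    simp only [List.foldr_cons] at h ⊢
    rcases Nat.le_total (as.foldr max 0) a with h' | h'
    · rw [Nat.max_eq_left h']; exact List.mem_cons_self
    · rw [Nat.max_eq_right h'] at h ⊢
      exact List.mem_cons_of_mem _ (ih h)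

lemma height_le_two_rho : ∀ (n : ℕ) (τ : CTree m), sizeOf τ ≤ n → (height τ : ℚ) ≤ 2 * rho τ := by
  intro n
  induction n with
  | zero => intro τ h; cases τ with | node l ts => simp at h
  | succ n ih =>
    intro τ h
    cases τ with
    | node l ts =>
      have hch : ∀ t ∈ ts, (height t : ℚ) ≤ 2 * rho t := by
        intro t ht
        apply ih
        have := List.sizeOf_lt_of_mem ht
        simp only [CTree.node.sizeOf_spec] at h
        omega
      have hch2 : ∀ t ∈ ts, (1:ℚ)/2 ≤ rho t := by
        intro t ht
        have h1 := hch t ht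
        have h2 := one_le_height t
        have : (1:ℚ) ≤ (height t : ℚ) := by exact_mod_cast h2
        linarith
      rw [rho_node, height_node]
      have hw : (1:ℚ)/2 ≤ (if (l : ℕ) = 0 then 1 else 1/2) := by
        split <;> norm_num
      set M := (ts.map height).foldr max 0 with hM
      by_cases hM0 : M = 0
      · rw [hM0]
        have hsum : (0:ℚ) ≤ (ts.map rho).sum := by
          apply List.sum_nonneg
          intro x hx
          obtain ⟨t, ht, rfl⟩ := List.mem_map.mp hx
          linarith [hch2 t ht]
        push_cast
        linarith
      · have hmem := foldr_max_mem (ns := ts.map height) hM0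
        obtain ⟨t₀, ht₀, hh₀⟩ := List.mem_map.mp hmem
        have h1 := hch t₀ ht₀
        rw [hh₀] at h1
        have h2 : rho t₀ ≤ (ts.map rho).sum := by
          apply List.single_le_sum
          · intro x hx
            obtain ⟨t, ht, rfl⟩ := List.mem_map.mp hx
            linarith [hch2 t ht]
          · exact List.mem_map.mpr ⟨t₀, ht₀, rfl⟩
        push_cast
        linarith

lemma height_le_two_rho' (τ : CTree m) : (height τ : ℚ) ≤ 2 * rho τ :=
  height_le_two_rho (sizeOf τ) τ le_rfl

lemma half_le_rho (τ : CTree m) : (1:ℚ)/2 ≤ rho τ := by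
  have h1 := height_le_two_rho' τ
  have h2 := one_le_height τ
  have : (1:ℚ) ≤ (height τ : ℚ) := by exact_mod_cast h2
  linarith

def chain (hm : 1 ≤ m) : ℕ → CTree m
  | 0 => node ⟨1, by omega⟩ []
  | n+1 => node ⟨1, by omega⟩ [chain hm n]

lemma height_chain (hm : 1 ≤ m) : ∀ n, height (chain hm n) = n + 1 := by
  intro n
  induction n with
  | zero => rw [chain, height_node]; simp
  | succ n ih => rw [chain, height_node]; simp [ih]; omega

lemma rho_chain (hm : 1 ≤ m) : ∀ n, rho (chain hm n) = (n + 1 : ℚ) / 2 := by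
  intro n
  induction n with
  | zero => rw [chain, rho_node]; norm_num
  | succ n ih =>
    rw [chain, rho_node]
    simp only [List.map_cons, List.map_nil, List.sum_cons, List.sum_nil, ih]
    norm_num
    ring

lemma min_struct (τ : CTree m) (h2 : 2 ≤ height τ) (hρ : rho τ = (height τ : ℚ) / 2) :
    ∃ (l : Fin (m+1)) (σ : CTree m), 1 ≤ (l : ℕ) ∧ height σ = height τ - 1 ∧
      rho σ = (height σ : ℚ) / 2 ∧ τ = node l [σ] := by
  cases τ with
  | node l ts =>
    rw [height_node] at h2 hρ ⊢
    rw [rho_node] at hρ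
    set M := (ts.map height).foldr max 0 with hM
    have hM1 : 1 ≤ M := by omega
    have hmem := foldr_max_mem (ns := ts.map height) (by omega)
    obtain ⟨t₀, ht₀, hh₀⟩ := List.mem_map.mp hmem
    have hperm : List.Perm (ts.map rho) (rho t₀ :: ((ts.erase t₀).map rho)) :=
      (List.perm_cons_erase ht₀).map rho
    have hsum : (ts.map rho).sum = rho t₀ + ((ts.erase t₀).map rho).sum := hperm.sum_eq
    have hrest : ∀ x ∈ (ts.erase t₀).map rho, (1:ℚ)/2 ≤ x := by
      intro x hx
      obtain ⟨t, ht, rfl⟩ := List.mem_map.mp hx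
      exact half_le_rho t
    have hrest0 : (0:ℚ) ≤ ((ts.erase t₀).map rho).sum :=
      List.sum_nonneg (fun x hx => le_trans (by norm_num) (hrest x hx))
    have ht0 : (M:ℚ) ≤ 2 * rho t₀ := by
      have := height_le_two_rho' t₀; rw [hh₀] at this; exact this
    have hw : (1:ℚ)/2 ≤ (if (l : ℕ) = 0 then 1 else 1/2) := by split <;> norm_num
    -- equation: w + rho t₀ + rest = (1 + M)/2
    have heq : (if (l : ℕ) = 0 then 1 else 1/2) + (rho t₀ + ((ts.erase t₀).map rho).sum)
        = (1 + (M:ℚ)) / 2 := by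
      rw [← hsum]; push_cast at hρ ⊢; linarith [hρ]
    -- deduce l ≠ 0
    have hl : (l : ℕ) ≠ 0 := by
      intro h0
      rw [if_pos h0] at heq
      linarith
    rw [if_neg hl] at heq
    -- rest sum = 0 and erase empty
    have hrho0 : rho t₀ = (M:ℚ)/2 ∧ ((ts.erase t₀).map rho).sum = 0 := by
      constructor <;> linarith
    have herase : ts.erase t₀ = [] := by
      by_contra hne
      obtain ⟨x, hx⟩ := List.exists_mem_of_ne_nil _ hne
      have h5 : rho x ≤ ((ts.erase t₀).map rho).sum :=
        List.single_le_sum (fun y hy => le_trans (by norm_num) (hrest y hy)) _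
          (List.mem_map.mpr ⟨x, hx, rfl⟩)
      linarith [half_le_rho x, hrho0.2]
    have hts : ts = [t₀] := by
      have := List.perm_cons_erase ht₀
      rw [herase] at this
      exact List.perm_singleton.mp this
    refine ⟨l, t₀, by omega, by omega, ?_, by rw [hts]⟩
    rw [hh₀]; exact hrho0.1

end CTree

open CTree in
theorem stmt6 (m k : ℕ) (hm : 1 ≤ m) (hk : 2 ≤ k) :
    ({τ : CTree m | height τ = k ∧ ∀ σ : CTree m, height σ = k → rho τ ≤ rho σ}
      = {τ : CTree m | ∃ (l : Fin (m+1)) (σ : CTree m), 1 ≤ (l : ℕ) ∧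
          (height σ = k - 1 ∧ ∀ σ' : CTree m, height σ' = k - 1 → rho σ ≤ rho σ') ∧ τ = .node l [σ]})
    ∧ IsLeast {r : ℚ | ∃ τ : CTree m, height τ = k ∧ rho τ = r} ((k : ℚ) / 2) := by
  have hmin : ∀ n : ℕ, ∀ τ : CTree m, height τ = n → (n:ℚ)/2 ≤ rho τ := by
    intro n τ hτ
    have := height_le_two_rho' τ
    rw [hτ] at this
    linarith
  have hchain : ∀ n : ℕ, 1 ≤ n → height (chain hm (n-1)) = n := by
    intro n hn; rw [height_chain]; omega
  have hrchain : ∀ n : ℕ, 1 ≤ n → rho (chain hm (n-1)) = (n:ℚ)/2 := by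
    intro n hn
    rw [rho_chain]
    congr 1
    have : (n - 1) + 1 = n := by omega
    exact_mod_cast congrArg (Nat.cast : ℕ → ℚ) this
  have hcast : ((k-1:ℕ):ℚ) = (k:ℚ) - 1 := by
    have : ((k-1:ℕ):ℚ) + 1 = (k:ℚ) := by
      have : (k - 1) + 1 = k := by omega
      exact_mod_cast congrArg (Nat.cast : ℕ → ℚ) this
    linarith
  constructor
  · ext τ
    simp only [Set.mem_setOf_eq]
    constructor
    · rintro ⟨hh, hle⟩
      have hρ : rho τ = (k:ℚ)/2 := by
        refine le_antisymm ?_ (hmin k τ hh)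
        have := hle (chain hm (k-1)) (hchain k (by omega))
        rwa [hrchain k (by omega)] at this
      obtain ⟨l, σ, hl, hσh, hσρ, rfl⟩ := min_struct τ (by omega) (by rw [hh]; exact hρ)
      refine ⟨l, σ, hl, ⟨by omega, ?_⟩, rfl⟩
      intro σ' hσ'
      have h1 := hmin (k-1) σ' hσ'
      rw [hσρ]
      have : height σ = k - 1 := by omega
      rw [this]; exact h1
    · rintro ⟨l, σ, hl, ⟨hσh, hσmin⟩, rfl⟩
      have hσρ : rho σ = ((k:ℚ)-1)/2 := by
        have h1 := hσmin (chain hm (k-1-1)) (hchain (k-1) (by omega))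
        rw [hrchain (k-1) (by omega), hcast] at h1
        have h2 := hmin (k-1) σ hσh
        rw [hcast] at h2
        linarith
      have hρnode : rho (node l [σ]) = (k:ℚ)/2 := by
        rw [rho_node]
        have : (l:ℕ) ≠ 0 := by omega
        rw [if_neg this]
        simp only [List.map_cons, List.map_nil, List.sum_cons, List.sum_nil, hσρ]
        ring
      refine ⟨?_, ?_⟩
      · rw [height_node]
        simp only [List.map_cons, List.map_nil, List.foldr_cons, List.foldr_nil]
        rw [Nat.max_eq_left (Nat.zero_le _), hσh]
        omega
      · intro σ' hσ'
        rw [hρnode]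
        exact hmin k σ' hσ'
  · constructor
    · exact ⟨chain hm (k-1), hchain k (by omega), hrchain k (by omega)⟩
    · rintro r ⟨τ, hτ, rfl⟩
      exact hmin k τ hτ
end

section
/- If Φ₀(τ)=Φ(τ) for all colored rooted trees τ with 𝔯(τ) ≤ G₀, and Φ_{k+1} is defined by the modified Newton recursion Φ_{k+1}(∅)=1, Φ_{k+1}(τ) = Φ_ex(τ) + (Φ_k ∘ Φ_im)(τ) + ((Φ_{k+1} − Φ_k) ∗ Φ_im)(τ), where Φ satisfies the fixed point equation Φ(τ) = Φ_ex(τ) + (Φ ∘ Φ_im)(τ), then for all k ≥ 0, Φ_k(τ) = Φ(τ) for all τ with 𝔯(τ) ≤ G₀ + k. -/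
namespace CTree

variable {m : ℕ}

/-- All ordered splittings of a tree `τ` into a root-sharing subtree `θ` (`none` = empty tree)
together with the list of remainder trees `ω` left over when `θ` is removed from `τ`. -/
def split : CTree m → List (Option (CTree m) × List (CTree m))
  | .node l ts =>
    (none, [.node l ts]) ::
    ((ts.attach.map (fun t => split t.1)).sections.map
      (fun cs => (some (.node l (cs.filterMap Prod.fst)), (cs.map Prod.snd).flatten)))
decreasing_by
  all_goals try simp only [CTree.node.sizeOf_spec, List.cons.sizeOf_spec, List.nil.sizeOf_spec]
  all_goals try have := List.sizeOf_lt_of_mem t.2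
  all_goals omega

/-- Composition of B--series coefficient maps: `comp φx φy` is the coefficient map of
`B(φy, B(φx, x₀; h); h)`.  Coefficient maps are defined on `Option (CTree m)`,
with `none` playing the role of the empty tree ∅. -/
def comp {R : Type*} [CommRing R] (φx φy : Option (CTree m) → R) : Option (CTree m) → R
  | none => φy none
  | some τ => ((split τ).map (fun p => φy p.1 * (p.2.map (fun δ => φx (some δ))).prod)).sum

/-- The bilinear operation `∗`: sum over splittings with exactly one remainder tree. -/
def star {R : Type*} [CommRing R] (φx φy : Option (CTree m) → R) (τ : CTree m) : R :=
  (((split τ).filter (fun p => p.2.length == 1)).map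
    (fun p => φy p.1 * (p.2.map (fun δ => φx (some δ))).prod)).sum


theorem tind {P : CTree m → Prop} (h : ∀ l ts, (∀ t ∈ ts, P t) → P (node l ts)) : ∀ τ, P τ
  | node l ts => h l ts (fun t ht => tind h t)
decreasing_by
  have := List.sizeOf_lt_of_mem ht
  simp only [CTree.node.sizeOf_spec]; omega

theorem le_foldr_max_s16 {x : ℕ} : ∀ {l : List ℕ}, x ∈ l → x ≤ l.foldr max 0 := by
  intro l hx
  induction l with
  | nil => simp at hx
  | cons a l ih =>
    rcases List.mem_cons.mp hx with rfl | hx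
    · simp
    · exact le_trans (ih hx) (by simp)

theorem ram_single (l : Fin (m+1)) (t : CTree m) : ram (node l [t]) = ram t := by
  rw [ram.eq_def]

theorem ram_cons2 (l : Fin (m+1)) (a b : CTree m) (r : List (CTree m)) :
    ram (node l (a::b::r)) = 1 + ((a::b::r).map ram).foldr max 0 := by
  rw [ram.eq_def]
  simp only
  rw [List.attach_map_val]

theorem ram_child_le (l : Fin (m+1)) (ts : List (CTree m)) (t : CTree m) (ht : t ∈ ts) :
    ram t ≤ ram (node l ts) := by
  match ts, ht with
  | [t'], ht =>
    have : t = t' := by simpa using ht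
    subst this; rw [ram_single]
  | a::b::r, ht =>
    rw [ram_cons2]
    have : ram t ∈ (a::b::r).map ram := List.mem_map_of_mem ht
    have := le_foldr_max_s16 this
    omega

theorem ram_child_lt (l : Fin (m+1)) (a b : CTree m) (r : List (CTree m)) (t : CTree m)
    (ht : t ∈ a::b::r) : ram t + 1 ≤ ram (node l (a::b::r)) := by
  rw [ram_cons2]
  have : ram t ∈ (a::b::r).map ram := List.mem_map_of_mem ht
  have := le_foldr_max_s16 this
  omega

theorem mem_split_iff (l : Fin (m+1)) (ts : List (CTree m)) (p) :
    p ∈ split (node l ts) ↔ p = (none, [node l ts]) ∨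
      ∃ cs, List.Forall₂ (· ∈ ·) cs (ts.map split) ∧
        p = (some (node l (cs.filterMap Prod.fst)), (cs.map Prod.snd).flatten) := by
  rw [split.eq_1, List.attach_map_val]
  simp only [List.mem_cons, List.mem_map, List.mem_sections]
  constructor
  · rintro (h | ⟨cs, h1, h2⟩)
    · exact Or.inl h
    · exact Or.inr ⟨cs, h1, h2.symm⟩
  · rintro (h | ⟨cs, h1, h2⟩)
    · exact Or.inl h
    · exact Or.inr ⟨cs, h1, h2.symm⟩

theorem f2mem {α β : Type*} {R : α → β → Prop} : ∀ {cs : List α} {L : List β},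
    List.Forall₂ R cs L → ∀ c ∈ cs, ∃ b ∈ L, R c b := by
  intro cs L h
  induction h with
  | nil => simp
  | cons h _ ih =>
    intro c hc
    rcases List.mem_cons.mp hc with rfl | hc
    · exact ⟨_, List.mem_cons_self, h⟩
    · obtain ⟨b, hb, hr⟩ := ih c hc
      exact ⟨b, List.mem_cons_of_mem _ hb, hr⟩

theorem ram_split_le : ∀ τ : CTree m, ∀ p ∈ split τ, ∀ δ ∈ p.2, ram δ ≤ ram τ := by
  apply tind
  intro l ts IH p hp δ hδ
  rcases (mem_split_iff l ts p).mp hp with rfl | ⟨cs, hcs, rfl⟩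
  · simp at hδ; subst hδ; rfl
  · simp only [List.mem_flatten, List.mem_map] at hδ
    obtain ⟨w, ⟨c, hc, rfl⟩, hδ⟩ := hδ
    obtain ⟨b, hb, hcb⟩ := f2mem hcs c hc
    obtain ⟨t, ht, rfl⟩ := List.mem_map.mp hb
    exact le_trans (IH t ht c hcb δ hδ) (ram_child_le l ts t ht)

theorem size_split_le : ∀ τ : CTree m, ∀ p ∈ split τ, ∀ δ ∈ p.2, sizeOf δ ≤ sizeOf τ := by
  apply tind
  intro l ts IH p hp δ hδ
  rcases (mem_split_iff l ts p).mp hp with rfl | ⟨cs, hcs, rfl⟩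
  · simp at hδ; subst hδ; rfl
  · simp only [List.mem_flatten, List.mem_map] at hδ
    obtain ⟨w, ⟨c, hc, rfl⟩, hδ⟩ := hδ
    obtain ⟨b, hb, hcb⟩ := f2mem hcs c hc
    obtain ⟨t, ht, rfl⟩ := List.mem_map.mp hb
    have h1 := IH t ht c hcb δ hδ
    have h2 := List.sizeOf_lt_of_mem ht
    simp only [CTree.node.sizeOf_spec]
    omega

theorem size_split_lt : ∀ τ : CTree m, ∀ p ∈ split τ, p.1 ≠ none → ∀ δ ∈ p.2, sizeOf δ < sizeOf τ := by
  rintro ⟨l, ts⟩ p hp hne δ hδ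
  rcases (mem_split_iff l ts p).mp hp with rfl | ⟨cs, hcs, rfl⟩
  · exact absurd rfl hne
  · simp only [List.mem_flatten, List.mem_map] at hδ
    obtain ⟨w, ⟨c, hc, rfl⟩, hδ⟩ := hδ
    obtain ⟨b, hb, hcb⟩ := f2mem hcs c hc
    obtain ⟨t, ht, rfl⟩ := List.mem_map.mp hb
    have h1 := size_split_le t c hcb δ hδ
    have h2 := List.sizeOf_lt_of_mem ht
    simp only [CTree.node.sizeOf_spec]
    omega

theorem ram_split_two : ∀ τ : CTree m, ∀ p ∈ split τ, 2 ≤ p.2.length →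
    ∀ δ ∈ p.2, ram δ + 1 ≤ ram τ := by
  apply tind
  intro l ts IH p hp hlen δ hδ
  rcases (mem_split_iff l ts p).mp hp with rfl | ⟨cs, hcs, rfl⟩
  · simp at hlen
  · match ts, hcs with
    | [], hcs =>
      have hcs' : List.Forall₂ (· ∈ ·) cs ([] : List (List (Option (CTree m) × List (CTree m)))) := by
        simpa using hcs
      cases hcs'
      simp at hlen
    | [t], hcs =>
      have hcs' : List.Forall₂ (· ∈ ·) cs [split t] := by simpa using hcs
      rcases List.forall₂_cons_right_iff.mp hcs' with ⟨c, cs', hc, hnil, rfl⟩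
      cases hnil
      simp only [List.map_cons, List.map_nil, List.flatten_cons, List.flatten_nil,
        List.append_nil] at hlen hδ
      have := IH t (by simp) c hc hlen δ hδ
      rw [ram_single]; exact this
    | a::b::r, hcs =>
      simp only [List.mem_flatten, List.mem_map] at hδ
      obtain ⟨w, ⟨c, hc, rfl⟩, hδ⟩ := hδ
      obtain ⟨bb, hb, hcb⟩ := f2mem hcs c hc
      obtain ⟨t, ht, rfl⟩ := List.mem_map.mp hb
      have h1 := ram_split_le t c hcb δ hδ
      have h2 := ram_child_lt l a b r t ht
      omega

end CTree

theorem sum_filter_ite {α R : Type*} [CommRing R] (l : List α) (p : α → Bool) (f : α → R) :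
    ((l.filter p).map f).sum = (l.map (fun x => if p x then f x else 0)).sum := by
  induction l with
  | nil => simp
  | cons a l ih =>
    by_cases h : p a <;> simp [List.filter_cons, h, ih]

theorem sum_map_add' {α R : Type*} [CommRing R] (l : List α) (f g : α → R) :
    (l.map f).sum + (l.map g).sum = (l.map (fun x => f x + g x)).sum := by
  induction l with
  | nil => simp
  | cons a l ih => simp only [List.map_cons, List.sum_cons, ← ih]; ring


open CTree in
theorem stmt16 {R : Type*} [CommRing R] (m : ℕ)
    (Φex Φim Φf : Option (CTree m) → R) (Φ : ℕ → Option (CTree m) → R) (G₀ : ℕ)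
    (hex : Φex none = 1) (him : Φim none = 0)
    (hfe : Φf none = 1)
    (hf : ∀ τ : CTree m, Φf (some τ) = Φex (some τ) + comp Φf Φim (some τ))
    (h0e : Φ 0 none = 1)
    (h0 : ∀ τ : CTree m, ram τ ≤ G₀ → Φ 0 (some τ) = Φf (some τ))
    (hite : ∀ k, Φ (k + 1) none = 1)
    (hit : ∀ (k : ℕ) (τ : CTree m), Φ (k + 1) (some τ) =
        Φex (some τ) + comp (Φ k) Φim (some τ)
          + star (fun t => Φ (k + 1) t - Φ k t) Φim τ) :
    ∀ (k : ℕ) (τ : CTree m), ram τ ≤ G₀ + k → Φ k (some τ) = Φf (some τ) := by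
  intro k
  induction k with
  | zero => intro τ h; exact h0 τ h
  | succ k IH =>
    suffices key : ∀ n (τ : CTree m), sizeOf τ ≤ n → ram τ ≤ G₀ + (k+1) →
        Φ (k+1) (some τ) = Φf (some τ) by
      intro τ h; exact key (sizeOf τ) τ le_rfl h
    intro n
    induction n with
    | zero =>
      rintro ⟨l, ts⟩ hs
      simp only [CTree.node.sizeOf_spec] at hs
      omega
    | succ n ihn =>
      intro τ hs hr
      rw [hit, hf τ]
      have hcomp : ∀ ψ : Option (CTree m) → R, comp ψ Φim (some τ) =
          ((split τ).map (fun p => Φim p.1 * (p.2.map (fun δ => ψ (some δ))).prod)).sum := by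
        intro ψ; rfl
      rw [hcomp, hcomp, CTree.star, sum_filter_ite, add_assoc, sum_map_add']
      congr 1
      apply congrArg
      apply List.map_congr_left
      intro p hp
      match hp1 : p.1 with
      | none => simp [him]
      | some θ =>
        have hsize : ∀ δ ∈ p.2, sizeOf δ ≤ n := by
          intro δ hδ
          have := size_split_lt τ p hp (by rw [hp1]; exact Option.some_ne_none θ) δ hδ
          omega
        have hram : ∀ δ ∈ p.2, ram δ ≤ G₀ + (k+1) := by
          intro δ hδ
          exact le_trans (ram_split_le τ p hp δ hδ) hr
        by_cases hlen : p.2.length = 1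
        · obtain ⟨δ, hδ⟩ := List.length_eq_one_iff.mp hlen
          have hk1 : Φ (k+1) (some δ) = Φf (some δ) :=
            ihn δ (hsize δ (by simp [hδ])) (hram δ (by simp [hδ]))
          simp only [hδ, List.map_cons, List.map_nil, List.prod_cons, List.prod_nil,
            List.length_cons, List.length_nil, hp1]
          rw [if_pos (by simp), hk1]
          ring
        · rw [if_neg (by simpa using hlen), add_zero]
          rcases Nat.lt_or_ge p.2.length 2 with h2 | h2
          · have : p.2.length = 0 := by omega
            rw [List.length_eq_zero_iff] at this
            simp [this]
          · have : ∀ δ ∈ p.2, Φ k (some δ) = Φf (some δ) := by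
              intro δ hδ
              apply IH
              have := ram_split_two τ p hp h2 δ hδ
              omega
            rw [List.map_congr_left (fun δ hδ => by rw [this δ hδ])]
end
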